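/- Let a > b > 0 be real numbers. Then ln(a+1)/a ≥ (1/b) · ln(1 + 2b/(a - b + 2)), with equality if and only if a = b; in particular for a > b the inequality is strict. -/

import Mathlib

open Real

theorem log_inequality_ab (a b : ℝ) (hb : 0 < b) (hab : b < a) :
    (1 / b) * Real.log (1 + 2 * b / (a - b + 2)) < Real.log (a + 1) / a := by
  have ha : 0 < a := hb.trans hab
  set c : ℝ := a + 2 with hc
  have hca : a < c := by rw [hc]; linarith
  have hc0 : 0 < c := ha.trans hca
  set g : ℝ → ℝ := fun t => Real.log (c + t) - Real.log (c - t) with hg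
  -- derivative of g on (-c, c)
  have hder : ∀ x ∈ Set.Ioo (-c) c, HasDerivAt g ((c + x)⁻¹ + (c - x)⁻¹) x := by
    intro x hx
    have h1 : (0:ℝ) < c + x := by linarith [hx.1]
    have h2 : (0:ℝ) < c - x := by linarith [hx.2]
    have d1 : HasDerivAt (fun t : ℝ => c + t) 1 x := by
      simpa using (hasDerivAt_id x).const_add c
    have d2 : HasDerivAt (fun t : ℝ => c - t) (-1) x := by
      simpa using (hasDerivAt_id x).const_sub c
    have l1 : HasDerivAt (fun t : ℝ => Real.log (c + t)) (1 / (c + x)) x :=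
      d1.log h1.ne'
    have l2 : HasDerivAt (fun t : ℝ => Real.log (c - t)) ((-1) / (c - x)) x :=
      d2.log h2.ne'
    have := l1.sub l2
    refine this.congr_deriv ?_
    ring
  have hconv : StrictConvexOn ℝ (Set.Icc (0:ℝ) a) g := by
    apply strictConvexOn_of_deriv2_pos (convex_Icc _ _)
    · intro x hx
      have h1 : (0:ℝ) < c + x := by linarith [hx.1]
      have h2 : (0:ℝ) < c - x := by linarith [hx.2, hca]
      exact ((Real.continuousAt_log h1.ne').comp (by fun_prop) |>.sub
        ((Real.continuousAt_log h2.ne').comp (by fun_prop))).continuousWithinAt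
    · intro x hx
      rw [interior_Icc] at hx
      have hx1 : (0:ℝ) < c + x := by linarith [hx.1]
      have hx2 : (0:ℝ) < c - x := by linarith [hx.2, hca]
      have hxmem : x ∈ Set.Ioo (-c) c := ⟨by linarith [hx.1], by linarith [hx.2, hca]⟩
      -- deriv g = φ near x
      have heq : deriv g =ᶠ[nhds x] fun t => (c + t)⁻¹ + (c - t)⁻¹ := by
        filter_upwards [isOpen_Ioo.mem_nhds hxmem] with t ht
        exact (hder t ht).deriv
      -- derivative of φ at x
      have d1 : HasDerivAt (fun t : ℝ => c + t) 1 x := by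
        simpa using (hasDerivAt_id x).const_add c
      have d2 : HasDerivAt (fun t : ℝ => c - t) (-1) x := by
        simpa using (hasDerivAt_id x).const_sub c
      have i1 : HasDerivAt (fun t : ℝ => (c + t)⁻¹) (-1 / (c + x) ^ 2) x := by
        exact d1.inv hx1.ne'
      have i2 : HasDerivAt (fun t : ℝ => (c - t)⁻¹) (1 / (c - x) ^ 2) x := by
        have := d2.inv hx2.ne'
        refine this.congr_deriv ?_
        ring
      have dphi : HasDerivAt (fun t : ℝ => (c + t)⁻¹ + (c - t)⁻¹)
          (-1 / (c + x) ^ 2 + 1 / (c - x) ^ 2) x := i1.add i2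
      have : deriv^[2] g x = -1 / (c + x) ^ 2 + 1 / (c - x) ^ 2 := by
        simp only [Function.iterate_succ, Function.iterate_zero, Function.comp_apply, id]
        rw [heq.deriv_eq]
        exact dphi.deriv
      rw [this]
      have hlt : c - x < c + x := by linarith [hx.1]
      have h3 : 1 / (c + x) ^ 2 < 1 / (c - x) ^ 2 := by
        apply one_div_lt_one_div_of_lt (by positivity)
        nlinarith
      have h4 : -1 / (c + x) ^ 2 = -(1 / (c + x) ^ 2) := by ring
      linarith
  -- secant slopes
  have hsec := hconv.secant_strict_mono (a := 0) (x := b) (y := a)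
    (Set.left_mem_Icc.mpr ha.le) ⟨hb.le, hab.le⟩ (Set.right_mem_Icc.mpr ha.le)
    hb.ne' ha.ne' hab
  have hg0 : g 0 = 0 := by simp [hg]
  rw [hg0] at hsec
  simp only [sub_zero] at hsec
  -- identify g b and g a with the statement
  have hcb1 : (0:ℝ) < c + b := by linarith
  have hcb2 : (0:ℝ) < c - b := by linarith
  have hgb : g b = Real.log (1 + 2 * b / (a - b + 2)) := by
    have h1 : (1:ℝ) + 2 * b / (a - b + 2) = (c + b) / (c - b) := by
      have hne : a - b + 2 ≠ 0 := by intro h; linarith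
      have hne2 : a + 2 - b ≠ 0 := by intro h; linarith
      rw [hc]; field_simp; ring
    rw [h1, Real.log_div hcb1.ne' hcb2.ne', hg]
  have hga : g a = Real.log (a + 1) := by
    have h1 : c + a = 2 * (a + 1) := by rw [hc]; ring
    have h2 : c - a = 2 := by rw [hc]; ring
    simp only [hg, h1, h2]
    rw [Real.log_mul (by norm_num) (by positivity)]
    ring
  rw [hgb, hga] at hsec
  calc (1 / b) * Real.log (1 + 2 * b / (a - b + 2))
      = Real.log (1 + 2 * b / (a - b + 2)) / b := by ring
    _ < Real.log (a + 1) / a := hsec
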